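/- Let φ be analytic on the unit disk 𝔻 with φ(0) = 1, and let f be analytic on 𝔻 with f(0)=0, f'(0)=1, f' nonvanishing, and 1 + z f''(z)/f'(z) = φ(ω(z)) for some analytic ω : 𝔻 → 𝔻 with ω(0) = 0. Then for every z ∈ 𝔻 with z ≠ 0, writing t = |z| and w = ω(z), the Schwarzian derivative of f satisfies |S_f(z)| ≤ |2wφ'(w) + 1 − φ(w)²|/(2t²) + ((t² − |w|²)/(t²(1−t²))) |φ'(w)|. -/

import Mathlib

open Metric Complex

lemma normSq_mobius (a z : ℂ) :
    Complex.normSq (1 + (starRingEnd ℂ) a * z) - Complex.normSq (a + z)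
      = (1 - Complex.normSq a) * (1 - Complex.normSq z) := by
  have h : ((Complex.normSq (1 + (starRingEnd ℂ) a * z) : ℂ) - Complex.normSq (a + z))
      = ((1 - (Complex.normSq a : ℂ))) * ((1 - (Complex.normSq z : ℂ))) := by
    rw [← Complex.mul_conj, ← Complex.mul_conj, ← Complex.mul_conj, ← Complex.mul_conj]
    simp only [map_add, map_mul, Complex.conj_conj, map_one]
    ring
  exact_mod_cast h

lemma schwarz_pick {g : ℂ → ℂ} (hg : DifferentiableOn ℂ g (ball 0 1))
    (hb : ∀ z ∈ ball (0:ℂ) 1, ‖(g z)‖ ≤ 1) {a : ℂ} (ha : a ∈ ball (0:ℂ) 1) :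
    ‖(deriv g a)‖ ≤ (1 - ‖(g a)‖ ^ 2) / (1 - ‖a‖ ^ 2) := by
  have haa : ‖a‖ < 1 := by simpa using mem_ball_zero_iff.mp ha
  have hden_pos : (0:ℝ) < 1 - ‖a‖ ^ 2 := by nlinarith [norm_nonneg a]
  rcases eq_or_lt_of_le (hb a ha) with hb1 | hb1
  · -- |g a| = 1 : g is constant by max modulus, deriv = 0
    have hmax : IsMaxOn (norm ∘ g) (ball (0:ℂ) 1) a := by
      intro z hz
      simp only [Function.comp_apply, Set.mem_setOf_eq, hb1]
      exact hb z hz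
    have heq := Complex.eqOn_of_isPreconnected_of_isMaxOn_norm
      (convex_ball (0:ℂ) 1).isPreconnected isOpen_ball hg ha hmax
    have hev : g =ᶠ[nhds a] (fun _ => g a) :=
      Filter.eventuallyEq_of_mem (isOpen_ball.mem_nhds ha) heq
    rw [hev.deriv_eq, deriv_const, hb1]
    norm_num
  · -- |g a| < 1
    set b := g a with hbdef
    have habs_b : ‖b‖ < 1 := hb1
    -- Möbius m
    set m : ℂ → ℂ := fun ζ => (a + ζ) / (1 + (starRingEnd ℂ) a * ζ) with hmdef
    have hden_m : ∀ ζ ∈ ball (0:ℂ) 1, (1 + (starRingEnd ℂ) a * ζ) ≠ 0 := by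
      intro ζ hζ h0
      have hζ1 : ‖ζ‖ < 1 := mem_ball_zero_iff.mp hζ
      have : ‖((starRingEnd ℂ) a * ζ)‖ < 1 := by
        rw [norm_mul, Complex.norm_conj]
        calc ‖a‖ * ‖ζ‖ ≤ 1 * ‖ζ‖ := by
              apply mul_le_mul_of_nonneg_right haa.le (norm_nonneg ζ)
          _ < 1 := by simpa using hζ1
      have h1 : (starRingEnd ℂ) a * ζ = -1 := by linear_combination h0
      rw [h1] at this; simp at this
    have hm_maps : ∀ ζ ∈ ball (0:ℂ) 1, m ζ ∈ ball (0:ℂ) 1 := by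
      intro ζ hζ
      have hζ1 : ‖ζ‖ < 1 := mem_ball_zero_iff.mp hζ
      have hpos : 0 < Complex.normSq (1 + (starRingEnd ℂ) a * ζ) - Complex.normSq (a + ζ) := by
        rw [normSq_mobius]
        have h1 : Complex.normSq a < 1 := by
          rw [← Complex.sq_norm]; nlinarith [norm_nonneg a]
        have h2 : Complex.normSq ζ < 1 := by
          rw [← Complex.sq_norm]; nlinarith [norm_nonneg ζ]
        nlinarith
      have habslt : ‖(a + ζ)‖ < ‖(1 + (starRingEnd ℂ) a * ζ)‖ := by
        have := hpos
        rw [← Complex.sq_norm, ← Complex.sq_norm] at this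
        nlinarith [norm_nonneg (a + ζ), norm_nonneg (1 + (starRingEnd ℂ) a * ζ)]
      rw [mem_ball_zero_iff]
      simp only [hmdef, norm_div]
      rw [div_lt_one (lt_of_le_of_lt (norm_nonneg _) habslt)]
      exact habslt
    have hball0 : (0:ℂ) ∈ ball (0:ℂ) 1 := mem_ball_self one_pos
    have hm0 : m 0 = a := by simp [hmdef]
    have hga : DifferentiableAt ℂ g a := hg.differentiableAt (isOpen_ball.mem_nhds ha)
    -- derivative of m at 0
    have d1 : HasDerivAt (fun ζ : ℂ => a + ζ) 1 0 := by
      simpa using (hasDerivAt_id (0:ℂ)).const_add a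
    have d2 : HasDerivAt (fun ζ : ℂ => 1 + (starRingEnd ℂ) a * ζ) ((starRingEnd ℂ) a) 0 := by
      simpa using ((hasDerivAt_id (0:ℂ)).const_mul ((starRingEnd ℂ) a)).const_add 1
    have hdm : HasDerivAt m (1 - a * (starRingEnd ℂ) a) 0 := by
      have h := d1.div d2 (hden_m 0 hball0)
      exact h.congr_deriv (by simp)
    have hgd0 : HasDerivAt g (deriv g a) (m 0) := by rw [hm0]; exact hga.hasDerivAt
    have hgm : HasDerivAt (fun ζ => g (m ζ)) (deriv g a * (1 - a * (starRingEnd ℂ) a)) 0 :=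
      hgd0.comp 0 hdm
    set G : ℂ := deriv g a * (1 - a * (starRingEnd ℂ) a) with hGdef
    set q : ℂ → ℂ := fun ζ => (g (m ζ) - b) / (1 - (starRingEnd ℂ) b * g (m ζ)) with hqdef
    have hden_q : ∀ x : ℂ, ‖x‖ ≤ 1 → (1 - (starRingEnd ℂ) b * x) ≠ 0 := by
      intro x hx h0
      have hlt : ‖((starRingEnd ℂ) b * x)‖ < 1 := by
        rw [norm_mul, Complex.norm_conj]
        calc ‖b‖ * ‖x‖ ≤ ‖b‖ * 1 :=
              mul_le_mul_of_nonneg_left hx (norm_nonneg b)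
          _ < 1 := by simpa using habs_b
      have h1 : (starRingEnd ℂ) b * x = 1 := by linear_combination -h0
      rw [h1] at hlt; simp at hlt
    have hq_bound : ∀ ζ ∈ ball (0:ℂ) 1, ‖(q ζ)‖ ≤ 1 := by
      intro ζ hζ
      have hx : ‖(g (m ζ))‖ ≤ 1 := hb _ (hm_maps ζ hζ)
      set x := g (m ζ) with hxdef
      have hkey : 0 ≤ Complex.normSq (1 - (starRingEnd ℂ) b * x) - Complex.normSq (x - b) := by
        have h := normSq_mobius (-b) x
        rw [map_neg] at h
        have e1 : (1 + -(starRingEnd ℂ) b * x) = 1 - (starRingEnd ℂ) b * x := by ring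
        have e2 : (-b + x) = x - b := by ring
        rw [e1, e2, Complex.normSq_neg] at h
        rw [h]
        have h1 : Complex.normSq b < 1 := by
          rw [← Complex.sq_norm]; nlinarith [norm_nonneg b]
        have h2 : Complex.normSq x ≤ 1 := by
          rw [← Complex.sq_norm]; nlinarith [norm_nonneg x]
        nlinarith
      have hle : ‖(x - b)‖ ≤ ‖(1 - (starRingEnd ℂ) b * x)‖ := by
        rw [← Complex.sq_norm, ← Complex.sq_norm] at hkey
        nlinarith [norm_nonneg (x - b), norm_nonneg (1 - (starRingEnd ℂ) b * x)]
      have hdq : (1 - (starRingEnd ℂ) b * x) ≠ 0 := hden_q x hx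
      simp only [hqdef, norm_div]
      rw [div_le_one (norm_pos_iff.mpr hdq)]
      exact hle
    have hq_diff : DifferentiableOn ℂ q (ball (0:ℂ) 1) := by
      intro ζ hζ
      have hmd : DifferentiableAt ℂ m ζ :=
        ((differentiableAt_const a).add differentiableAt_id).div
          ((differentiableAt_const 1).add (differentiableAt_id.const_mul _)) (hden_m ζ hζ)
      have hgd' : DifferentiableAt ℂ g (m ζ) :=
        hg.differentiableAt (isOpen_ball.mem_nhds (hm_maps ζ hζ))
      have hcomp : DifferentiableAt ℂ (fun ζ => g (m ζ)) ζ := hgd'.comp ζ hmd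
      exact (((hcomp.sub_const b).div ((hcomp.const_mul _).const_sub 1)
        (hden_q _ (hb _ (hm_maps ζ hζ))))).differentiableWithinAt
    have hq0 : q 0 = 0 := by
      simp only [hqdef, hm0, ← hbdef]
      simp
    have hd1 : ‖(deriv q 0)‖ ≤ 1 := by
      apply le_of_forall_pos_le_add
      intro ε hε
      have hmaps : Set.MapsTo q (ball (0:ℂ) 1) (closedBall (q 0) (1 + ε)) := by
        intro ζ hζ
        rw [hq0, mem_closedBall_zero_iff]
        exact le_of_lt <| lt_of_le_of_lt (by simpa using hq_bound ζ hζ) (by linarith)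
      have h := Complex.norm_deriv_le_div_of_mapsTo_ball hq_diff hmaps one_pos
      simpa using h
    have hden0' : (1 - (starRingEnd ℂ) b * g (m 0)) ≠ 0 := by
      rw [hm0, ← hbdef]; exact hden_q b habs_b.le
    have hq' : HasDerivAt q
        ((G * (1 - (starRingEnd ℂ) b * g (m 0)) - (g (m 0) - b) * (-((starRingEnd ℂ) b * G)))
          / (1 - (starRingEnd ℂ) b * g (m 0)) ^ 2) 0 :=
      (hgm.sub_const b).div ((hgm.const_mul _).const_sub 1) hden0'
    have hbb : (1 : ℂ) - (starRingEnd ℂ) b * b ≠ 0 := hden_q b habs_b.le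
    have hq_deriv : deriv q 0 = G / (1 - (starRingEnd ℂ) b * b) := by
      rw [hq'.deriv, hm0, ← hbdef]
      field_simp
      ring
    -- assemble
    have habs1 : ‖((1:ℂ) - (starRingEnd ℂ) b * b)‖ = 1 - ‖b‖ ^ 2 := by
      have : (1:ℂ) - (starRingEnd ℂ) b * b = ((1 - ‖b‖ ^ 2 : ℝ) : ℂ) := by
        rw [mul_comm, Complex.mul_conj, ← Complex.sq_norm]
        push_cast
        ring
      rw [this, Complex.norm_of_nonneg (by nlinarith [norm_nonneg b])]
    have habs2 : ‖((1:ℂ) - a * (starRingEnd ℂ) a)‖ = 1 - ‖a‖ ^ 2 := by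
      have : (1:ℂ) - a * (starRingEnd ℂ) a = ((1 - ‖a‖ ^ 2 : ℝ) : ℂ) := by
        rw [Complex.mul_conj, ← Complex.sq_norm]
        push_cast
        ring
      rw [this, Complex.norm_of_nonneg (by nlinarith [norm_nonneg a])]
    rw [hq_deriv, norm_div, habs1, hGdef, norm_mul, habs2] at hd1
    rw [div_le_one (by nlinarith [norm_nonneg b])] at hd1
    rw [le_div_iff₀ hden_pos]
    exact hd1

/-- Pointwise Schwarzian estimate for functions with `1 + z f''/f' = φ ∘ ω`:
for `z ≠ 0` in the disk, with `t = |z|`, `w = ω(z)`,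
`|S_f(z)| ≤ |2wφ'(w) + 1 - φ(w)²|/(2t²) + ((t² - |w|²)/(t²(1-t²))) |φ'(w)|`. -/
theorem schwarzian_pointwise_estimate (φ : ℂ → ℂ)
    (hφ : DifferentiableOn ℂ φ (ball (0:ℂ) 1)) (hφ0 : φ 0 = 1)
    (ω : ℂ → ℂ) (hω : DifferentiableOn ℂ ω (ball (0:ℂ) 1))
    (hωmap : ∀ z ∈ ball (0:ℂ) 1, ω z ∈ ball (0:ℂ) 1) (hω0 : ω 0 = 0)
    (f : ℂ → ℂ) (hf : DifferentiableOn ℂ f (ball (0:ℂ) 1))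
    (hf0 : f 0 = 0) (hf1 : deriv f 0 = 1)
    (hf' : ∀ z ∈ ball (0:ℂ) 1, deriv f z ≠ 0)
    (hsub : ∀ z ∈ ball (0:ℂ) 1,
      1 + z * deriv (deriv f) z / deriv f z = φ (ω z)) :
    ∀ z ∈ ball (0:ℂ) 1, z ≠ 0 →
      ‖(deriv (deriv (deriv f)) z / deriv f z
          - (3 / 2) * (deriv (deriv f) z / deriv f z) ^ 2)‖
        ≤ ‖(2 * ω z * deriv φ (ω z) + 1 - φ (ω z) ^ 2)‖
            / (2 * ‖z‖ ^ 2)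
          + (‖z‖ ^ 2 - ‖(ω z)‖ ^ 2)
              / (‖z‖ ^ 2 * (1 - ‖z‖ ^ 2))
            * ‖(deriv φ (ω z))‖ := by
  intro z hz hz0
  have hopen : ball (0:ℂ) 1 ∈ nhds z := isOpen_ball.mem_nhds hz
  have hfa : AnalyticOnNhd ℂ f (ball 0 1) := hf.analyticOnNhd isOpen_ball
  have hd1 : DifferentiableAt ℂ (deriv f) z := ((hfa.deriv) z hz).differentiableAt
  have hd2 : DifferentiableAt ℂ (deriv (deriv f)) z := ((hfa.deriv.deriv) z hz).differentiableAt
  have hωd : DifferentiableAt ℂ ω z := hω.differentiableAt hopen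
  have hφd : DifferentiableAt ℂ φ (ω z) :=
    hφ.differentiableAt (isOpen_ball.mem_nhds (hωmap z hz))
  have hane : deriv f z ≠ 0 := hf' z hz
  -- product form of the hypothesis
  have hprod : ∀ x ∈ ball (0:ℂ) 1,
      x * deriv (deriv f) x = (φ (ω x) - 1) * deriv f x := by
    intro x hx
    have h := hsub x hx
    field_simp [hf' x hx] at h
    linear_combination h
  -- differentiate the identity
  have hev : (fun x => x * deriv (deriv f) x)
      =ᶠ[nhds z] (fun x => (φ (ω x) - 1) * deriv f x) :=
    Filter.eventuallyEq_of_mem hopen (fun x hx => hprod x hx)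
  have hL : HasDerivAt (fun x => x * deriv (deriv f) x)
      (1 * deriv (deriv f) z + z * deriv (deriv (deriv f)) z) z :=
    (hasDerivAt_id z).mul hd2.hasDerivAt
  have hφω : HasDerivAt (fun x => φ (ω x)) (deriv φ (ω z) * deriv ω z) z :=
    (hφd.hasDerivAt).comp z hωd.hasDerivAt
  have hR : HasDerivAt (fun x => (φ (ω x) - 1) * deriv f x)
      ((deriv φ (ω z) * deriv ω z) * deriv f z + (φ (ω z) - 1) * deriv (deriv f) z) z :=
    (hφω.sub_const 1).mul hd1.hasDerivAt
  have h2 := hev.deriv_eq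
  rw [hL.deriv, hR.deriv] at h2
  have h1 : z * deriv (deriv f) z = (φ (ω z) - 1) * deriv f z := hprod z hz
  -- key polynomial identity
  have hkey : 2*z^2 * deriv f z * deriv (deriv (deriv f)) z
        - 3 * z^2 * (deriv (deriv f) z)^2
      = (2*z*(deriv φ (ω z) * deriv ω z) + 1 - (φ (ω z))^2) * (deriv f z)^2 := by
    linear_combination (2*z*deriv f z) * h2
      + (-3*z*deriv (deriv f) z - (φ (ω z) + 1) * deriv f z) * h1
  -- the auxiliary function g = dslope ω 0
  set g : ℂ → ℂ := dslope ω 0 with hgdef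
  have hgdiff : DifferentiableOn ℂ g (ball 0 1) :=
    (Complex.differentiableOn_dslope (isOpen_ball.mem_nhds (mem_ball_self one_pos))).mpr hω
  have hgbd : ∀ x ∈ ball (0:ℂ) 1, ‖(g x)‖ ≤ 1 := by
    intro x hx
    have hmaps : Set.MapsTo ω (ball (0:ℂ) 1) (closedBall (ω 0) 1) := by
      rw [hω0]; exact fun y hy => ball_subset_closedBall (hωmap y hy)
    have := Complex.norm_dslope_le_div_of_mapsTo_ball hω hmaps hx
    simpa using this
  have hgz : g z = ω z / z := by
    rw [hgdef, dslope_of_ne _ hz0, slope_def_field, hω0]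
    simp
  have hevg : g =ᶠ[nhds z] fun x => ω x / x := by
    apply Filter.eventuallyEq_of_mem (isOpen_compl_singleton.mem_nhds hz0)
    intro x hx
    rw [hgdef, dslope_of_ne _ hx, slope_def_field, hω0]
    simp
  have hD : HasDerivAt (fun x => ω x / x) ((deriv ω z * z - ω z * 1) / z^2) z :=
    hωd.hasDerivAt.div (hasDerivAt_id z) hz0
  have hgderiv : deriv g z = (deriv ω z * z - ω z) / z^2 := by
    rw [hevg.deriv_eq, hD.deriv]; ring_nf
  have hSP := schwarz_pick hgdiff hgbd hz
  -- numeric facts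
  have ht0 : 0 < ‖z‖ := norm_pos_iff.mpr hz0
  have ht1 : ‖z‖ < 1 := mem_ball_zero_iff.mp hz
  have ht2 : (0:ℝ) < 1 - ‖z‖ ^ 2 := by nlinarith
  have hgz_abs : ‖(g z)‖ = ‖(ω z)‖ / ‖z‖ := by
    rw [hgz, norm_div]
  have hSP' : ‖(deriv g z)‖
      ≤ (‖z‖ ^ 2 - ‖(ω z)‖ ^ 2)
          / (‖z‖ ^ 2 * (1 - ‖z‖ ^ 2)) := by
    rw [hgz_abs] at hSP
    have heq : (1 - (‖(ω z)‖ / ‖z‖) ^ 2) / (1 - ‖z‖ ^ 2)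
        = (‖z‖ ^ 2 - ‖(ω z)‖ ^ 2)
            / (‖z‖ ^ 2 * (1 - ‖z‖ ^ 2)) := by
      field_simp
    rw [← heq]; exact hSP
  -- decomposition of the Schwarzian
  have hS : deriv (deriv (deriv f)) z / deriv f z
        - (3/2) * (deriv (deriv f) z / deriv f z) ^ 2
      = (2 * ω z * deriv φ (ω z) + 1 - φ (ω z) ^ 2) / (2*z^2)
        + deriv φ (ω z) * deriv g z := by
    rw [hgderiv]
    field_simp
    linear_combination hkey
  rw [hS]
  calc ‖((2 * ω z * deriv φ (ω z) + 1 - φ (ω z) ^ 2) / (2*z^2)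
        + deriv φ (ω z) * deriv g z)‖
      ≤ ‖((2 * ω z * deriv φ (ω z) + 1 - φ (ω z) ^ 2) / (2*z^2))‖
        + ‖(deriv φ (ω z) * deriv g z)‖ := norm_add_le _ _
    _ = ‖(2 * ω z * deriv φ (ω z) + 1 - φ (ω z) ^ 2)‖ / (2 * ‖z‖ ^ 2)
        + ‖(deriv φ (ω z))‖ * ‖(deriv g z)‖ := by
        rw [norm_div, norm_mul, norm_mul, norm_pow, Complex.norm_two]
    _ ≤ ‖(2 * ω z * deriv φ (ω z) + 1 - φ (ω z) ^ 2)‖ / (2 * ‖z‖ ^ 2)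
        + (‖z‖ ^ 2 - ‖(ω z)‖ ^ 2)
            / (‖z‖ ^ 2 * (1 - ‖z‖ ^ 2)) * ‖(deriv φ (ω z))‖ := by
        have := mul_le_mul_of_nonneg_left hSP' (norm_nonneg (deriv φ (ω z)))
        linarith [this]
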